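/- Let λ ∈ ℂ, p = x − λ ∈ ℂ[x], ι a finite index set, d : ι → ℕ with d(j) ≥ 1 for all j, and V = ⨁_{j ∈ ι} ℂ[x]/(p^{d(j)}). Let i_1 < i_2 < ⋯ < i_m be the distinct values of d, let m_k = #{j ∈ ι : d(j) = i_k} be the multiplicity of block size i_k, set Δ_1 = i_1 and Δ_k = i_k − i_{k−1} for k > 1, and let M_k = m_k + m_{k+1} + ⋯ + m_m. Then for every n ∈ ℕ, the number of fully invariant subspaces of V whose dimension as a complex vector space equals n is the coefficient of x^n in the polynomial f(x) = ∏_{k=1}^{m} ( ∑_{i=0}^{Δ_k} x^{i·M_k} ). -/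

import Mathlib

set_option synthInstance.maxHeartbeats 1000000
set_option maxHeartbeats 1000000
set_option linter.unusedSectionVars false

open Polynomial DirectSum

namespace St15
variable (lam : ℂ)

local notation "R" => Polynomial ℂ
local notation "pp" => (X - C lam : Polynomial ℂ)

lemma p_prime : Prime (X - C lam) :=
  (Polynomial.irreducible_X_sub_C lam).prime

lemma p_ne_zero : (X - C lam) ≠ 0 := Polynomial.X_sub_C_ne_zero lam

/-- The ideal `(p^e)`. -/
noncomputable abbrev Ie (e : ℕ) : Ideal (Polynomial ℂ) := Ideal.span {(X - C lam) ^ e}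

/-- The cyclic module `ℂ[x]/(p^e)`. -/
abbrev Q (e : ℕ) := Polynomial ℂ ⧸ Ie lam e

/-- quotient map as linear map -/
noncomputable abbrev mkq (e : ℕ) : Polynomial ℂ →ₗ[Polynomial ℂ] Q lam e :=
  (Ie lam e).mkQ

/-- The submodule `(p^a)/(p^e)`. -/
noncomputable def S (e a : ℕ) : Submodule (Polynomial ℂ) (Q lam e) :=
  Submodule.span (Polynomial ℂ) {mkq lam e ((X - C lam) ^ a)}

lemma mem_S_of_dvd {e a : ℕ} {r : Polynomial ℂ} (h : (X - C lam) ^ a ∣ r) :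
    mkq lam e r ∈ S lam e a := by
  obtain ⟨s, rfl⟩ := h
  rw [mul_comm, ← smul_eq_mul, map_smul]
  exact Submodule.smul_mem _ s (Submodule.mem_span_singleton_self _)

lemma pow_dvd_of_mem_S {e a c : ℕ} (hae : a ≤ e)
    (h : mkq lam e ((X - C lam) ^ c) ∈ S lam e a) : a ≤ c := by
  rw [S, Submodule.mem_span_singleton] at h
  obtain ⟨s, hs⟩ := h
  have : mkq lam e ((X - C lam) ^ c - s * (X - C lam) ^ a) = 0 := by
    rw [map_sub, ← hs, ← smul_eq_mul, map_smul, sub_self]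
  rw [Submodule.mkQ_apply, Submodule.Quotient.mk_eq_zero, Ideal.mem_span_singleton] at this
  obtain ⟨t, ht⟩ := this
  have hdvd : (X - C lam) ^ a ∣ (X - C lam) ^ c := by
    have : (X - C lam) ^ c = s * (X - C lam) ^ a + (X - C lam) ^ e * t := by linear_combination ht
    rw [this]
    exact dvd_add (Dvd.intro_left s rfl) (Dvd.dvd.mul_right (pow_dvd_pow _ hae) t)
  exact (pow_dvd_pow_iff (p_ne_zero lam) (p_prime lam).not_unit).mp hdvd


/-- valuation decomposition -/
lemma exists_pow_mul (r : Polynomial ℂ) (hr : r ≠ 0) :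
    ∃ b u, ¬ (X - C lam) ∣ u ∧ r = (X - C lam) ^ b * u := by
  obtain ⟨n, hn⟩ : ∃ n, r.natDegree = n := ⟨_, rfl⟩
  induction n using Nat.strong_induction_on generalizing r with
  | _ n ih =>
    by_cases hdvd : (X - C lam) ∣ r
    · obtain ⟨r', rfl⟩ := hdvd
      have hr' : r' ≠ 0 := right_ne_zero_of_mul hr
      have hdeg : r'.natDegree < n := by
        rw [← hn, natDegree_mul (p_ne_zero lam) hr', natDegree_X_sub_C]
        omega
      obtain ⟨b, u, hu, rfl⟩ := ih _ hdeg r' hr' rfl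
      exact ⟨b + 1, u, hu, by ring⟩
    · exact ⟨0, r, hdvd, by ring⟩

/-- An element of W of valuation b, b < e, gives mk (p^b) ∈ W. -/
lemma mk_pow_mem_of_mem {e b : ℕ} (W : Submodule (Polynomial ℂ) (Q lam e))
    {u : Polynomial ℂ} (hu : ¬ (X - C lam) ∣ u)
    (hmem : mkq lam e ((X - C lam) ^ b * u) ∈ W) :
    mkq lam e ((X - C lam) ^ b) ∈ W := by
  have hcop : IsCoprime ((X - C lam) ^ e) u :=
    (((p_prime lam).coprime_iff_not_dvd).mpr hu).pow_left
  obtain ⟨s, t, hst⟩ := hcop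
  have hmul : ∀ y : Polynomial ℂ, mkq lam e (t * y) = t • mkq lam e y := fun y => by
    rw [show t * y = t • y from rfl, map_smul]
  have key : mkq lam e ((X - C lam) ^ b - t * ((X - C lam) ^ b * u)) = 0 := by
    rw [Submodule.mkQ_apply, Submodule.Quotient.mk_eq_zero, Ideal.mem_span_singleton]
    exact ⟨(X - C lam) ^ b * s, by linear_combination (-(X - C lam) ^ b) * hst⟩
  rw [map_sub, sub_eq_zero, hmul] at key
  rw [key]
  exact W.smul_mem t hmem

/-- Classification of submodules of ℂ[x]/(p^e). -/
theorem submodule_classify {e : ℕ} (W : Submodule (Polynomial ℂ) (Q lam e)) :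
    ∃ a, a ≤ e ∧ W = S lam e a := by
  have hmk0 : mkq lam e ((X - C lam) ^ e) ∈ W := by
    have : mkq lam e ((X - C lam) ^ e) = 0 := by
      rw [Submodule.mkQ_apply, Submodule.Quotient.mk_eq_zero]
      exact Ideal.subset_span rfl
    rw [this]; exact W.zero_mem
  have hex : ∃ n, n ≤ e ∧ mkq lam e ((X - C lam) ^ n) ∈ W := ⟨e, le_rfl, hmk0⟩
  classical
  let a := Nat.find hex
  obtain ⟨hae, haW⟩ := Nat.find_spec hex
  refine ⟨a, hae, le_antisymm ?_ ?_⟩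
  · -- W ≤ S e a
    intro w hw
    obtain ⟨r, rfl⟩ := (Ie lam e).mkQ_surjective w
    by_cases hr : r = 0
    · subst hr; simp only [map_zero]; exact (S lam e a).zero_mem
    obtain ⟨b, u, hu, rfl⟩ := exists_pow_mul lam r hr
    by_cases hbe : e ≤ b
    · exact mem_S_of_dvd lam (dvd_mul_of_dvd_left (pow_dvd_pow _ (hae.trans hbe)) u)
    · push_neg at hbe
      have hb : mkq lam e ((X - C lam) ^ b) ∈ W := mk_pow_mem_of_mem lam W hu hw
      have hab : a ≤ b := Nat.find_min' hex ⟨hbe.le, hb⟩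
      exact mem_S_of_dvd lam (dvd_mul_of_dvd_left (pow_dvd_pow _ hab) u)
  · -- S e a ≤ W
    rw [S, Submodule.span_singleton_le_iff_mem]
    exact haW

/-- Uniqueness. -/
lemma S_inj {e a a' : ℕ} (ha : a ≤ e) (ha' : a' ≤ e) (h : S lam e a = S lam e a') : a = a' := by
  have h1 : a' ≤ a := pow_dvd_of_mem_S lam ha' (h ▸ Submodule.mem_span_singleton_self _)
  have h2 : a ≤ a' := pow_dvd_of_mem_S lam ha (h ▸ Submodule.mem_span_singleton_self _)
  omega

end St15

namespace St15
variable (lam : ℂ)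

/-- Any module hom `Q e → Q f` maps `S e a` into `S f a'` provided `a' ≤ a + (f - e)`. -/
lemma hom_maps_S {e f a a' : ℕ} (ψ : Q lam e →ₗ[Polynomial ℂ] Q lam f)
    (hcond : a' ≤ a + (f - e)) {x : Q lam e} (hx : x ∈ S lam e a) :
    ψ x ∈ S lam f a' := by
  obtain ⟨q, hq⟩ := (Ie lam f).mkQ_surjective (ψ (mkq lam e 1))
  -- p^f ∣ p^e * q
  have h0 : mkq lam f ((X - C lam) ^ e * q) = 0 := by
    have : (X - C lam) ^ e • ψ (mkq lam e 1) = ψ (mkq lam e ((X - C lam) ^ e)) := by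
      rw [← map_smul]
      congr 1
      rw [← map_smul]
      congr 1
      rw [smul_eq_mul, mul_one]
    rw [← hq] at this
    have h2 : mkq lam e ((X - C lam) ^ e) = 0 := by
      rw [Submodule.mkQ_apply, Submodule.Quotient.mk_eq_zero]
      exact Ideal.subset_span rfl
    rw [h2, map_zero] at this
    calc mkq lam f ((X - C lam) ^ e * q) = (X - C lam) ^ e • mkq lam f q := by
          rw [← map_smul]; congr 1
      _ = 0 := this
  rw [Submodule.mkQ_apply, Submodule.Quotient.mk_eq_zero, Ideal.mem_span_singleton] at h0
  have hq_dvd : (X - C lam) ^ (f - e) ∣ q := by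
    rcases le_total f e with hfe | hef
    · simp [Nat.sub_eq_zero_of_le hfe]
    · obtain ⟨t, ht⟩ := h0
      refine ⟨t, ?_⟩
      have he : (X - C lam) ^ e ≠ 0 := pow_ne_zero _ (p_ne_zero lam)
      apply mul_left_cancel₀ he
      rw [ht, show (X - C lam) ^ e * ((X - C lam) ^ (f - e) * t)
        = (X - C lam) ^ (e + (f - e)) * t by ring_nf, Nat.add_sub_cancel' hef]
  -- now handle general x ∈ S e a
  rw [S, Submodule.mem_span_singleton] at hx
  obtain ⟨r, rfl⟩ := hx
  rw [map_smul]
  apply Submodule.smul_mem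
  have : ψ (mkq lam e ((X - C lam) ^ a)) = mkq lam f ((X - C lam) ^ a * q) := by
    have h1 : mkq lam e ((X - C lam) ^ a) = (X - C lam) ^ a • mkq lam e 1 := by
      rw [← map_smul]; congr 1; rw [smul_eq_mul, mul_one]
    rw [h1, map_smul, ← hq, ← map_smul]
    congr 1
  rw [this]
  apply mem_S_of_dvd
  calc (X - C lam) ^ a' ∣ (X - C lam) ^ (a + (f - e)) := pow_dvd_pow _ hcond
    _ ∣ (X - C lam) ^ a * q := by
        rw [pow_add]; exact mul_dvd_mul_left _ hq_dvd

/-- reduction hom `Q e → Q f` for `f ≤ e`. -/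
noncomputable def red (e f : ℕ) (hfe : f ≤ e) : Q lam e →ₗ[Polynomial ℂ] Q lam f :=
  Submodule.mapQ _ _ LinearMap.id (by
    intro r hr
    simp only [Submodule.mem_comap, LinearMap.id_coe, id_eq]
    exact Ideal.span_singleton_le_span_singleton.mpr (pow_dvd_pow _ hfe) hr)

lemma red_apply (e f : ℕ) (hfe : f ≤ e) (r : Polynomial ℂ) :
    red lam e f hfe (mkq lam e r) = mkq lam f r := by
  rw [show mkq lam e r = Submodule.Quotient.mk r from rfl, red, Submodule.mapQ_apply]; rfl

/-- multiplication hom `Q e → Q f` for `e ≤ f`. -/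
noncomputable def mulh (e f : ℕ) (hef : e ≤ f) : Q lam e →ₗ[Polynomial ℂ] Q lam f :=
  Submodule.mapQ _ _ (LinearMap.lsmul (Polynomial ℂ) (Polynomial ℂ) ((X - C lam) ^ (f - e))) (by
    intro r hr
    simp only [Submodule.mem_comap, LinearMap.lsmul_apply, smul_eq_mul]
    rw [Ideal.mem_span_singleton] at hr ⊢
    obtain ⟨t, rfl⟩ := hr
    exact ⟨t, by rw [show (X - C lam) ^ (f - e) * ((X - C lam) ^ e * t)
      = (X - C lam) ^ (f - e + e) * t by ring_nf, Nat.sub_add_cancel hef]⟩)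

lemma mulh_apply (e f : ℕ) (hef : e ≤ f) (r : Polynomial ℂ) :
    mulh lam e f hef (mkq lam e r) = mkq lam f ((X - C lam) ^ (f - e) * r) := by
  rw [show mkq lam e r = Submodule.Quotient.mk r from rfl, mulh, Submodule.mapQ_apply]; rfl

end St15

namespace St15
variable (lam : ℂ)

lemma finrank_Q (c : ℕ) : Module.finrank ℂ (Q lam c) = c := by
  have h : ((X - C lam) ^ c) ≠ 0 := pow_ne_zero _ (X_sub_C_ne_zero lam)
  have := (AdjoinRoot.powerBasis h).finrank
  simp [AdjoinRoot.powerBasis, natDegree_pow] at this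
  exact this

instance finQ (c : ℕ) : Module.Finite ℂ (Q lam c) :=
  Module.Finite.of_basis (AdjoinRoot.powerBasis
    (pow_ne_zero c (X_sub_C_ne_zero lam))).basis

/-- The map `Q (e-a) → Q e` given by multiplication by `p^a`. -/
noncomputable def phiS (e a : ℕ) (hae : a ≤ e) :
    Q lam (e - a) →ₗ[Polynomial ℂ] Q lam e :=
  Submodule.mapQ _ _ (LinearMap.lsmul (Polynomial ℂ) (Polynomial ℂ) ((X - C lam) ^ a)) (by
    intro r hr
    simp only [Submodule.mem_comap, LinearMap.lsmul_apply, smul_eq_mul]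
    rw [Ideal.mem_span_singleton] at hr ⊢
    obtain ⟨t, rfl⟩ := hr
    exact ⟨t, by rw [show (X - C lam) ^ a * ((X - C lam) ^ (e - a) * t)
      = (X - C lam) ^ (a + (e - a)) * t by ring_nf, Nat.add_sub_cancel' hae]⟩)

lemma phiS_apply (e a : ℕ) (hae : a ≤ e) (r : Polynomial ℂ) :
    phiS lam e a hae (mkq lam (e - a) r) = mkq lam e ((X - C lam) ^ a * r) := by
  rw [show mkq lam (e - a) r = Submodule.Quotient.mk r from rfl, phiS, Submodule.mapQ_apply]; rfl

lemma phiS_injective (e a : ℕ) (hae : a ≤ e) : Function.Injective (phiS lam e a hae) := by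
  rw [← LinearMap.ker_eq_bot, LinearMap.ker_eq_bot']
  intro x hx
  obtain ⟨r, rfl⟩ := (Ie lam (e - a)).mkQ_surjective x
  rw [phiS_apply, Submodule.mkQ_apply, Submodule.Quotient.mk_eq_zero,
    Ideal.mem_span_singleton] at hx
  obtain ⟨t, ht⟩ := hx
  rw [Submodule.mkQ_apply, Submodule.Quotient.mk_eq_zero, Ideal.mem_span_singleton]
  refine ⟨t, ?_⟩
  have ha : (X - C lam) ^ a ≠ 0 := pow_ne_zero _ (p_ne_zero lam)
  apply mul_left_cancel₀ ha
  rw [ht, show (X - C lam) ^ a * ((X - C lam) ^ (e - a) * t)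
    = (X - C lam) ^ (a + (e - a)) * t by ring_nf, Nat.add_sub_cancel' hae]

lemma top_eq_span_one (c : ℕ) :
    (⊤ : Submodule (Polynomial ℂ) (Q lam c)) = Submodule.span (Polynomial ℂ) {mkq lam c 1} := by
  refine le_antisymm ?_ le_top
  intro x _
  obtain ⟨r, rfl⟩ := (Ie lam c).mkQ_surjective x
  rw [Submodule.mem_span_singleton]
  exact ⟨r, by rw [← map_smul]; congr 1; rw [smul_eq_mul, mul_one]⟩

lemma phiS_range (e a : ℕ) (hae : a ≤ e) :
    LinearMap.range (phiS lam e a hae) = S lam e a := by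
  rw [LinearMap.range_eq_map, top_eq_span_one, Submodule.map_span, Set.image_singleton,
    phiS_apply, mul_one, S]

/-- The equivalence `Q (e - a) ≃ S e a`. -/
noncomputable def Sequiv (e a : ℕ) (hae : a ≤ e) :
    Q lam (e - a) ≃ₗ[Polynomial ℂ] S lam e a :=
  (LinearEquiv.ofInjective _ (phiS_injective lam e a hae)).trans
    (LinearEquiv.ofEq _ _ (phiS_range lam e a hae))

lemma finrank_S (e a : ℕ) (hae : a ≤ e) :
    Module.finrank ℂ (S lam e a) = e - a := by
  rw [← ((Sequiv lam e a hae).restrictScalars ℂ).finrank_eq, finrank_Q]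

instance finS (e a : ℕ) : Module.Finite ℂ (S lam e a) := by
  rcases le_or_gt a e with hae | hlt
  · exact Module.Finite.equiv ((Sequiv lam e a hae).restrictScalars ℂ)
  · have hz : mkq lam e ((X - C lam) ^ a) = 0 := by
      rw [Submodule.mkQ_apply, Submodule.Quotient.mk_eq_zero]
      exact Ideal.mem_span_singleton.mpr (pow_dvd_pow _ hlt.le)
    have hb : S lam e a = ⊥ := by rw [S, hz, Submodule.span_zero_singleton]
    rw [hb]
    infer_instance

end St15

namespace St15
variable (lam : ℂ) (ι : Type*) [Fintype ι] [DecidableEq ι] (d : ι → ℕ)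

abbrev V := ⨁ j : ι, Q lam (d j)

/-- The candidate fully invariant submodule attached to exponents `a : ι → ℕ`. -/
noncomputable def WR (a : ι → ℕ) : Submodule (Polynomial ℂ) (V lam ι d) :=
  ⨅ j, (S lam (d j) (a j)).comap (component (Polynomial ℂ) ι _ j)

lemma mem_WR {a : ι → ℕ} {v : V lam ι d} :
    v ∈ WR lam ι d a ↔ ∀ j, component (Polynomial ℂ) ι _ j v ∈ S lam (d j) (a j) := by
  simp [WR, Submodule.mem_iInf]

lemma decomp (v : V lam ι d) :
    v = ∑ j, lof (Polynomial ℂ) ι _ j (component (Polynomial ℂ) ι _ j v) := by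
  conv_lhs => rw [← DirectSum.sum_univ_of v]
  refine Finset.sum_congr rfl fun j _ => ?_
  rw [lof_eq_of, DirectSum.apply_eq_component (Polynomial ℂ)]

lemma component_sum_lof (s : ∀ j, Q lam (d j)) (k : ι) :
    component (Polynomial ℂ) ι _ k (∑ j, lof (Polynomial ℂ) ι _ j (s j)) = s k := by
  rw [map_sum]
  rw [Finset.sum_eq_single k]
  · exact DirectSum.component.lof_self _ _ _
  · intro j _ hj
    rw [DirectSum.component.of, dif_neg hj]
  · intro h; exact absurd (Finset.mem_univ k) h

lemma WR_invariant (a : ι → ℕ) (hc : ∀ j j', a j' ≤ a j + (d j' - d j))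
    (φ : V lam ι d →ₗ[Polynomial ℂ] V lam ι d) (v : V lam ι d) (hv : v ∈ WR lam ι d a) :
    φ v ∈ WR lam ι d a := by
  rw [mem_WR] at hv ⊢
  intro k
  have : component (Polynomial ℂ) ι _ k (φ v) =
      ∑ j, ((component (Polynomial ℂ) ι _ k) ∘ₗ φ ∘ₗ (lof (Polynomial ℂ) ι _ j))
        (component (Polynomial ℂ) ι _ j v) := by
    conv_lhs => rw [decomp lam ι d v, map_sum, map_sum]
    rfl
  rw [this]
  exact Submodule.sum_mem _ fun j _ => hom_maps_S lam _ (hc j k) (hv j)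

lemma lof_mem_WR (a : ι → ℕ) (j0 : ι) (x : Q lam (d j0)) (hx : x ∈ S lam (d j0) (a j0)) :
    lof (Polynomial ℂ) ι _ j0 x ∈ WR lam ι d a := by
  rw [mem_WR]
  intro j
  rcases eq_or_ne j0 j with rfl | hne
  · rw [DirectSum.component.lof_self]; exact hx
  · rw [DirectSum.component.of, dif_neg hne]; exact Submodule.zero_mem _

/-- The pi-type description of `WR a`. -/
noncomputable def WRpiEquiv (a : ι → ℕ) :
    ↥(WR lam ι d a) ≃ₗ[ℂ] ∀ j, ↥(S lam (d j) (a j)) where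
  toFun v := fun j => ⟨component (Polynomial ℂ) ι _ j v.1, (mem_WR lam ι d).mp v.2 j⟩
  invFun s := ⟨∑ j, lof (Polynomial ℂ) ι _ j (s j).1, by
    rw [mem_WR]
    intro k
    rw [component_sum_lof]
    exact (s k).2⟩
  left_inv v := by
    apply Subtype.ext
    exact (decomp lam ι d v.1).symm
  right_inv s := by
    funext k
    ext
    exact component_sum_lof lam ι d _ k
  map_add' v w := by
    funext k
    ext
    simp
  map_smul' c v := by
    funext k
    ext
    simp

lemma finrank_WR (a : ι → ℕ) (ha : ∀ j, a j ≤ d j) :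
    Module.finrank ℂ ↥(WR lam ι d a) = ∑ j, (d j - a j) := by
  haveI : ∀ j, Module.Free ℂ (S lam (d j) (a j)) := fun j => Module.Free.of_divisionRing ℂ _
  rw [(WRpiEquiv lam ι d a).finrank_eq, Module.finrank_pi_fintype]
  exact Finset.sum_congr rfl fun j _ => finrank_S lam _ _ (ha j)

end St15

namespace St15
variable (lam : ℂ) {ι : Type*} [Fintype ι] [DecidableEq ι] (d : ι → ℕ)

theorem classify (W : Submodule ℂ (V lam ι d))
    (hW : ∀ φ : V lam ι d →ₗ[Polynomial ℂ] V lam ι d, ∀ w ∈ W, φ w ∈ W) :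
    ∃ a : ι → ℕ, (∀ j, a j ≤ d j) ∧ (∀ j j', a j' ≤ a j + (d j' - d j)) ∧
      W = (WR lam ι d a).restrictScalars ℂ := by
  classical
  let WR' : Submodule (Polynomial ℂ) (V lam ι d) :=
    { carrier := ↑W
      add_mem' := fun h1 h2 => W.add_mem h1 h2
      zero_mem' := W.zero_mem
      smul_mem' := fun r v hv => hW (LinearMap.lsmul (Polynomial ℂ) _ r) v hv }
  have hWR' : ∀ v : V lam ι d, v ∈ WR' ↔ v ∈ W := fun v => Iff.rfl
  choose a ha1 ha2 using fun j =>
    submodule_classify lam (Submodule.comap (lof (Polynomial ℂ) ι (fun j => Q lam (d j)) j) WR')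
  have hgen : ∀ j, lof (Polynomial ℂ) ι (fun j => Q lam (d j)) j (mkq lam (d j) ((X - C lam) ^ (a j))) ∈ W := by
    intro j
    have : mkq lam (d j) ((X - C lam) ^ (a j)) ∈
        Submodule.comap (lof (Polynomial ℂ) ι (fun j => Q lam (d j)) j) WR' := by
      rw [ha2 j]
      exact Submodule.mem_span_singleton_self _
    exact this
  have hcomp : ∀ (j : ι) (v : V lam ι d), v ∈ W →
      component (Polynomial ℂ) ι (fun j => Q lam (d j)) j v ∈ S lam (d j) (a j) := by
    intro j v hv
    have := hW ((lof (Polynomial ℂ) ι (fun j => Q lam (d j)) j) ∘ₗ (component (Polynomial ℂ) ι (fun j => Q lam (d j)) j)) v hv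
    have h2 : lof (Polynomial ℂ) ι (fun j => Q lam (d j)) j (component (Polynomial ℂ) ι (fun j => Q lam (d j)) j v) ∈ W := this
    rw [← ha2 j]
    exact h2
  have hcross : ∀ j j', a j' ≤ a j + (d j' - d j) := by
    intro j j'
    rcases le_total (d j') (d j) with hle | hle
    · -- reduction hom
      set ψ := red lam (d j) (d j') hle
      have hΦ := hW ((lof (Polynomial ℂ) ι (fun j => Q lam (d j)) j') ∘ₗ ψ ∘ₗ (component (Polynomial ℂ) ι (fun j => Q lam (d j)) j)) _
        (hgen j)
      have h3 : lof (Polynomial ℂ) ι (fun j => Q lam (d j)) j' (ψ (mkq lam (d j) ((X - C lam) ^ (a j)))) ∈ W := by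
        simpa [DirectSum.component.lof_self] using hΦ
      rw [red_apply] at h3
      have h4 := hcomp j' _ h3
      rw [DirectSum.component.lof_self] at h4
      have := pow_dvd_of_mem_S lam (ha1 j') h4
      omega
    · -- multiplication hom
      set ψ := mulh lam (d j) (d j') hle
      have hΦ := hW ((lof (Polynomial ℂ) ι (fun j => Q lam (d j)) j') ∘ₗ ψ ∘ₗ (component (Polynomial ℂ) ι (fun j => Q lam (d j)) j)) _
        (hgen j)
      have h3 : lof (Polynomial ℂ) ι (fun j => Q lam (d j)) j' (ψ (mkq lam (d j) ((X - C lam) ^ (a j)))) ∈ W := by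
        simpa [DirectSum.component.lof_self] using hΦ
      rw [mulh_apply, ← pow_add] at h3
      have h4 := hcomp j' _ h3
      rw [DirectSum.component.lof_self] at h4
      have := pow_dvd_of_mem_S lam (ha1 j') h4
      omega
  refine ⟨a, ha1, hcross, ?_⟩
  ext v
  rw [Submodule.restrictScalars_mem, mem_WR]
  constructor
  · intro hv j
    exact hcomp j v hv
  · intro hv
    have : v = ∑ j, lof (Polynomial ℂ) ι (fun j => Q lam (d j)) j (component (Polynomial ℂ) ι (fun j => Q lam (d j)) j v) :=
      decomp lam ι d v
    rw [this]
    refine Submodule.sum_mem W fun j _ => ?_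
    have : component (Polynomial ℂ) ι (fun j => Q lam (d j)) j v ∈
        Submodule.comap (lof (Polynomial ℂ) ι (fun j => Q lam (d j)) j) WR' := by
      rw [ha2 j]; exact hv j
    exact this

end St15

namespace St15C
variable {m : ℕ}

/-- predecessor -/
def fpred (k : Fin m) (_ : k.val ≠ 0) : Fin m :=
  ⟨k.val - 1, Nat.lt_of_le_of_lt (Nat.sub_le _ _) k.isLt⟩

lemma fin_val_induction (P : Fin m → Prop) (h0 : ∀ k : Fin m, k.val = 0 → P k)
    (hs : ∀ (k : Fin m) (hk : k.val ≠ 0), P (fpred k hk) → P k) : ∀ k, P k := by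
  have : ∀ (t : ℕ) (k : Fin m), k.val = t → P k := by
    intro t
    induction t using Nat.strong_induction_on with
    | _ t ih =>
      intro k hk
      rcases Nat.eq_zero_or_pos t with rfl | hpos
      · exact h0 k hk
      · exact hs k (by omega) (ih (t - 1) (by omega) _ (by simp [fpred, hk]))
  exact fun k => this k.val k rfl

lemma mono_of_step (g : Fin m → ℕ)
    (h : ∀ (k : Fin m) (hk : k.val ≠ 0), g (fpred k hk) ≤ g k) : Monotone g := by
  have key : ∀ (t : ℕ) (k k' : Fin m), k.val + t = k'.val → g k ≤ g k' := by
    intro t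
    induction t with
    | zero => intro k k' hkk'; have : k = k' := Fin.ext (by omega); rw [this]
    | succ t ih =>
      intro k k' hkk'
      have hk' : k'.val ≠ 0 := by omega
      refine le_trans (ih k (fpred k' hk') ?_) (h k' hk')
      simp [fpred]; omega
  intro k k' hkk'
  exact key (k'.val - k.val) k k' (by have := (Fin.le_def.mp hkk'); omega)

lemma Iic_eq_singleton (k : Fin m) (hk : k.val = 0) : Finset.Iic k = {k} := by
  ext l
  simp only [Finset.mem_Iic, Finset.mem_singleton]
  constructor
  · intro h; exact Fin.ext (by have := Fin.le_def.mp h; omega)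
  · rintro rfl; exact le_rfl

lemma Iic_eq_insert (k : Fin m) (hk : k.val ≠ 0) :
    Finset.Iic k = insert k (Finset.Iic (fpred k hk)) := by
  ext l
  simp only [Finset.mem_Iic, Finset.mem_insert, Fin.le_def, fpred]
  constructor
  · intro h
    rcases eq_or_ne l k with rfl | hne
    · exact Or.inl rfl
    · exact Or.inr (by have : l.val ≠ k.val := fun hc => hne (Fin.ext hc); omega)
  · rintro (rfl | h)
    · exact le_rfl
    · omega

lemma not_mem_Iic_fpred (k : Fin m) (hk : k.val ≠ 0) : k ∉ Finset.Iic (fpred k hk) := by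
  simp only [Finset.mem_Iic, Fin.le_def, fpred]
  omega

/-- partial sums -/
def B (c : Fin m → ℕ) (k : Fin m) : ℕ := ∑ l ∈ Finset.Iic k, c l

lemma B_zero (c : Fin m → ℕ) (k : Fin m) (hk : k.val = 0) : B c k = c k := by
  rw [B, Iic_eq_singleton k hk, Finset.sum_singleton]

lemma B_succ (c : Fin m → ℕ) (k : Fin m) (hk : k.val ≠ 0) :
    B c k = c k + B c (fpred k hk) := by
  rw [B, Iic_eq_insert k hk, Finset.sum_insert (not_mem_Iic_fpred k hk)]; rfl

lemma B_mono (c : Fin m → ℕ) : Monotone (B c) :=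
  mono_of_step _ (fun k hk => by rw [B_succ c k hk]; omega)

lemma sum_mult_B (mult M c : Fin m → ℕ) (hM : ∀ k, M k = ∑ k' ∈ Finset.Ici k, mult k') :
    ∑ k, mult k * B c k = ∑ l, c l * M l := by
  have hIic : ∀ k : Fin m, Finset.Iic k = Finset.univ.filter (· ≤ k) := by
    intro k; ext l; simp
  have hIci : ∀ k : Fin m, Finset.Ici k = Finset.univ.filter (k ≤ ·) := by
    intro k; ext l; simp
  calc ∑ k, mult k * B c k = ∑ k, ∑ l, if l ≤ k then mult k * c l else 0 := by
        refine Finset.sum_congr rfl fun k _ => ?_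
        rw [B, Finset.mul_sum, hIic, Finset.sum_filter]
    _ = ∑ l, ∑ k, if l ≤ k then mult k * c l else 0 := Finset.sum_comm
    _ = ∑ l, c l * M l := by
        refine Finset.sum_congr rfl fun l _ => ?_
        rw [hM, hIci, Finset.mul_sum, ← Finset.sum_filter]
        refine Finset.sum_congr rfl fun k _ => mul_comm _ _

end St15C

namespace St15C
variable {m : ℕ}

section main
variable (i Δ mult M : Fin m → ℕ)

/-- `B c k ≤ i k` when `c k ≤ Δ k`. -/
lemma B_le (hmono : StrictMono i)
    (hD : ∀ k : Fin m, Δ k = if hk : k.val = 0 then i k else i k - i (fpred k hk))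
    (c : Fin m → ℕ) (hc : ∀ k, c k ≤ Δ k) : ∀ k, B c k ≤ i k := by
  refine fin_val_induction _ (fun k hk => ?_) (fun k hk ih => ?_)
  · rw [B_zero c k hk]
    have := hc k; rw [hD, dif_pos hk] at this; exact this
  · rw [B_succ c k hk]
    have h1 := hc k; rw [hD, dif_neg hk] at h1
    have h2 : i (fpred k hk) ≤ i k :=
      hmono.monotone (by simp only [fpred, Fin.le_def]; omega)
    omega

/-- the map from `c`-tuples to `a`-tuples -/
def gmap (c : Fin m → ℕ) : Fin m → ℕ := fun k => i k - B c k

lemma gmap_adm (hmono : StrictMono i)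
    (hD : ∀ k : Fin m, Δ k = if hk : k.val = 0 then i k else i k - i (fpred k hk))
    (c : Fin m → ℕ) (hc : ∀ k, c k ≤ Δ k) :
    (∀ k, gmap i c k ≤ i k) ∧ Monotone (gmap i c) ∧
      Monotone (fun k => i k - gmap i c k) := by
  have hB := B_le i Δ hmono hD c hc
  have hsub : ∀ k, i k - gmap i c k = B c k := fun k => by
    simp only [gmap]; rw [Nat.sub_sub_self (hB k)]
  refine ⟨fun k => Nat.sub_le _ _, ?_, ?_⟩
  · refine mono_of_step _ (fun k hk => ?_)
    have h1 := hc k; rw [hD, dif_neg hk] at h1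
    have h2 : i (fpred k hk) ≤ i k :=
      hmono.monotone (by simp only [fpred, Fin.le_def]; omega)
    have h3 := B_succ c k hk
    have h4 := hB k
    have h5 := hB (fpred k hk)
    simp only [gmap]
    omega
  · simp only [hsub]
    exact B_mono c

lemma gmap_dim (hmono : StrictMono i)
    (hD : ∀ k : Fin m, Δ k = if hk : k.val = 0 then i k else i k - i (fpred k hk))
    (hM : ∀ k, M k = ∑ k' ∈ Finset.Ici k, mult k')
    (c : Fin m → ℕ) (hc : ∀ k, c k ≤ Δ k) :
    ∑ k, mult k * (i k - gmap i c k) = ∑ k, c k * M k := by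
  have hB := B_le i Δ hmono hD c hc
  have hsub : ∀ k, i k - gmap i c k = B c k := fun k => by
    simp only [gmap]; rw [Nat.sub_sub_self (hB k)]
  simp only [hsub]
  exact sum_mult_B mult M c hM

/-- main counting equivalence T2 = T3 -/
lemma card_T2_eq_T3 (hmono : StrictMono i)
    (hD : ∀ k : Fin m, Δ k = if hk : k.val = 0 then i k else i k - i (fpred k hk))
    (hM : ∀ k, M k = ∑ k' ∈ Finset.Ici k, mult k') (n : ℕ) :
    Nat.card {a : Fin m → ℕ //
        ((∀ k, a k ≤ i k) ∧ Monotone a ∧ Monotone (fun k => i k - a k)) ∧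
          ∑ k, mult k * (i k - a k) = n} =
    Nat.card {c : Fin m → ℕ // (∀ k, c k ≤ Δ k) ∧ ∑ k, c k * M k = n} := by
  refine (Nat.card_congr (Equiv.ofBijective
    (fun c => ⟨gmap i c.1, gmap_adm i Δ hmono hD c.1 c.2.1,
      by rw [gmap_dim i Δ mult M hmono hD hM c.1 c.2.1]; exact c.2.2⟩ :
      {c : Fin m → ℕ // (∀ k, c k ≤ Δ k) ∧ ∑ k, c k * M k = n} →
      {a : Fin m → ℕ // ((∀ k, a k ≤ i k) ∧ Monotone a ∧ Monotone (fun k => i k - a k)) ∧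
        ∑ k, mult k * (i k - a k) = n}) ⟨?_, ?_⟩)).symm
  · -- injective
    rintro ⟨c, hc⟩ ⟨c', hc'⟩ h
    have hB := B_le i Δ hmono hD c hc.1
    have hB' := B_le i Δ hmono hD c' hc'.1
    have heq : ∀ k, gmap i c k = gmap i c' k := fun k =>
      congrFun (congrArg Subtype.val h) k
    have hBeq : ∀ k, B c k = B c' k := by
      intro k
      have h5 := heq k
      simp only [gmap] at h5
      have h1 := hB k; have h2 := hB' k
      omega
    ext1
    funext k
    show c k = c' k
    by_cases hk : k.val = 0
    · have h1 := B_zero c k hk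
      have h2 := B_zero c' k hk
      have h3 := hBeq k
      omega
    · have h1 := B_succ c k hk
      have h2 := B_succ c' k hk
      have h3 := hBeq k
      have h4 := hBeq (fpred k hk)
      omega
  · -- surjective
    rintro ⟨a, ⟨⟨hbd, hamono, hbmono⟩, hdim⟩⟩
    classical
    set b : Fin m → ℕ := fun k => i k - a k with hb
    set c : Fin m → ℕ :=
      fun k => if hk : k.val = 0 then b k else b k - b (fpred k hk) with hcdef
    have hBb : ∀ k, B c k = b k := by
      refine fin_val_induction _ (fun k hk => ?_) (fun k hk ih => ?_)
      · rw [B_zero c k hk, hcdef]; simp [hk]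
      · rw [B_succ c k hk, ih, hcdef]
        simp only [dif_neg hk]
        have : b (fpred k hk) ≤ b k :=
          hbmono (by simp only [fpred, Fin.le_def]; omega)
        omega
    have hc : ∀ k, c k ≤ Δ k := by
      intro k
      rw [hcdef, hD]
      by_cases hk : k.val = 0
      · simp only [dif_pos hk]; exact Nat.sub_le _ _
      · simp only [dif_neg hk]
        have h2 : i (fpred k hk) ≤ i k :=
          hmono.monotone (by simp only [fpred, Fin.le_def]; omega)
        have h3 : a (fpred k hk) ≤ a k :=
          hamono (by simp only [fpred, Fin.le_def]; omega)
        have h4 := hbd k; have h5 := hbd (fpred k hk)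
        simp only [hb]
        omega
    refine ⟨⟨c, hc, ?_⟩, ?_⟩
    · rw [← hdim, ← sum_mult_B mult M c hM]
      refine Finset.sum_congr rfl fun k _ => ?_
      rw [hBb k]
    · ext1
      funext k
      simp only [gmap]
      rw [hBb k]
      have h4 := hbd k
      simp only [hb]
      omega

/-- T3 count equals the coefficient. -/
lemma card_T3_eq_coeff (n : ℕ) :
    Nat.card {c : Fin m → ℕ // (∀ k, c k ≤ Δ k) ∧ ∑ k, c k * M k = n} =
    (∏ k : Fin m, ∑ a ∈ Finset.range (Δ k + 1), (X : Polynomial ℕ) ^ (a * M k)).coeff n := by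
  classical
  rw [Finset.prod_univ_sum]
  have hcoeff : (∑ c ∈ Fintype.piFinset (fun k : Fin m => Finset.range (Δ k + 1)),
      ∏ k, (X : Polynomial ℕ) ^ (c k * M k)).coeff n =
      ((Fintype.piFinset (fun k : Fin m => Finset.range (Δ k + 1))).filter
        (fun c => ∑ k, c k * M k = n)).card := by
    rw [finset_sum_coeff, Finset.card_filter]
    refine Finset.sum_congr rfl fun c _ => ?_
    rw [Finset.prod_pow_eq_pow_sum, coeff_X_pow]
    simp [eq_comm]
  rw [hcoeff, ← Nat.card_eq_finsetCard]
  exact Nat.card_congr (Equiv.subtypeEquivRight fun c => by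
    simp [Fintype.mem_piFinset, Nat.lt_succ_iff])
end main
end St15C


open Polynomial DirectSum

/-- A subspace `W` of `V = ⨁_j ℂ[x]/(p^{d j})` is fully invariant if it is preserved by
every `ℂ[x]`-module endomorphism of `V`. -/
def FullyInv (lam : ℂ) (ι : Type*) [DecidableEq ι] (d : ι → ℕ)
    (W : Submodule ℂ (⨁ j : ι, Polynomial ℂ ⧸ Ideal.span {(X - C lam) ^ d j})) : Prop :=
  ∀ φ : (⨁ j : ι, Polynomial ℂ ⧸ Ideal.span {(X - C lam) ^ d j}) →ₗ[Polynomial ℂ]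
      (⨁ j : ι, Polynomial ℂ ⧸ Ideal.span {(X - C lam) ^ d j}),
    ∀ w ∈ W, φ w ∈ W

/-- For `V = ⨁_j ℂ[x]/(p^{d j})` with distinct block sizes `i 0 < ⋯ < i (m-1)`, block
multiplicities `mult k = #{j : d j = i k}`, block increments `Δ 0 = i 0`,
`Δ k = i k - i (k-1)`, and tail sums `M k = ∑_{k' ≥ k} mult k'`, the number of fully
invariant subspaces of `V` of complex dimension `n` is the coefficient of `x^n` in
`f(x) = ∏_k (∑_{i=0}^{Δ_k} x^{i·M_k})`. -/
theorem stmt15 (lam : ℂ) (ι : Type*) [Fintype ι] [DecidableEq ι]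
    (d : ι → ℕ) (hd : ∀ j, 1 ≤ d j)
    (m : ℕ) (i : Fin m → ℕ) (hmono : StrictMono i)
    (hrange : ∀ j : ι, ∃ k : Fin m, d j = i k) (hsur : ∀ k : Fin m, ∃ j : ι, d j = i k)
    (Δ : Fin m → ℕ)
    (hΔ : ∀ k : Fin m, Δ k = if k.val = 0 then i k
      else i k - i ⟨k.val - 1, Nat.lt_of_le_of_lt (Nat.sub_le _ _) k.isLt⟩)
    (mult : Fin m → ℕ)
    (hmult : ∀ k : Fin m, mult k = (Finset.univ.filter fun j : ι => d j = i k).card)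
    (M : Fin m → ℕ) (hM : ∀ k : Fin m, M k = ∑ k' ∈ Finset.Ici k, mult k')
    (f : Polynomial ℕ)
    (hf : f = ∏ k : Fin m,
      ∑ a ∈ Finset.range (Δ k + 1), (Polynomial.X : Polynomial ℕ) ^ (a * M k)) :
    ∀ n : ℕ,
      Nat.card {W : Submodule ℂ (⨁ j : ι, Polynomial ℂ ⧸ Ideal.span {(X - C lam) ^ d j}) //
          FullyInv lam ι d W ∧ Module.finrank ℂ W = n} = f.coeff n := by
  classical
  intro n
  choose kof hkof using hrange
  choose jk hjk using hsur
  have iinj : Function.Injective i := hmono.injective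
  have kof_eq : ∀ (j : ι) (k : Fin m), d j = i k → kof j = k := fun j k h =>
    iinj (by rw [← hkof j, ← h])
  have kof_jk : ∀ k, kof (jk k) = k := fun k => kof_eq _ _ (hjk k)
  have hD : ∀ k : Fin m, Δ k = if hk : (k : ℕ) = 0 then i k
      else i k - i (St15C.fpred k hk) := by
    intro k
    rw [hΔ k]
    by_cases hk : (k : ℕ) = 0
    · simp [hk]
    · simp [hk, St15C.fpred]
  -- grouped sums over ι
  have hsum : ∀ g : Fin m → ℕ, ∑ j, g (kof j) = ∑ k, mult k * g k := by
    intro g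
    rw [Finset.sum_comp g kof]
    have himg : Finset.image kof Finset.univ = Finset.univ :=
      Finset.eq_univ_of_forall fun k =>
        Finset.mem_image.mpr ⟨jk k, Finset.mem_univ _, kof_jk k⟩
    rw [himg]
    refine Finset.sum_congr rfl fun k _ => ?_
    have hfil : (Finset.univ.filter fun j : ι => kof j = k)
        = (Finset.univ.filter fun j : ι => d j = i k) :=
      Finset.filter_congr fun j _ =>
        ⟨fun h => by rw [hkof j, h], fun h => kof_eq j k h⟩
    rw [hmult k, smul_eq_mul, hfil]
  -- the map from exponent tuples to submodules
  set Wof : (Fin m → ℕ) → Submodule ℂ (St15.V lam ι d) := fun a =>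
    (St15.WR lam ι d (fun j => a (kof j))).restrictScalars ℂ with hWof
  have hfr : ∀ a : Fin m → ℕ, (∀ k, a k ≤ i k) →
      Module.finrank ℂ ↥(Wof a) = ∑ k, mult k * (i k - a k) := by
    intro a hbd
    rw [hWof]
    rw [LinearEquiv.finrank_eq
      ((Submodule.restrictScalarsEquiv ℂ (Polynomial ℂ) _ _).restrictScalars ℂ)]
    rw [St15.finrank_WR lam ι d _ (fun j => by rw [hkof j]; exact hbd (kof j))]
    rw [← hsum (fun k => i k - a k)]
    refine Finset.sum_congr rfl fun j _ => by rw [hkof j]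
  have hbridge : ∀ a : Fin m → ℕ,
      ((∀ k, a k ≤ i k) ∧ Monotone a ∧ Monotone fun k => i k - a k) →
      ∀ j j', a (kof j') ≤ a (kof j) + (d j' - d j) := by
    rintro a ⟨hbd, hamono, hbmono⟩ j j'
    rcases le_total (kof j) (kof j') with hle | hle
    · have h1 := hbmono hle
      have h2 := hbd (kof j); have h3 := hbd (kof j')
      have h4 : i (kof j) ≤ i (kof j') := hmono.monotone hle
      rw [hkof j, hkof j']
      simp only at h1
      omega
    · have h1 := hamono hle
      omega
  have hinj_aux : ∀ (x y : Fin m → ℕ), (∀ k, y k ≤ i k) → Wof x = Wof y →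
      ∀ k, y k ≤ x k := by
    intro x y hybd h k
    have hWeq : (St15.WR lam ι d fun j => x (kof j)) = St15.WR lam ι d fun j => y (kof j) :=
      Submodule.restrictScalars_injective ℂ _ _ h
    have hmem : lof (Polynomial ℂ) ι (fun j => St15.Q lam (d j)) (jk k)
        (St15.mkq lam (d (jk k)) ((X - C lam) ^ (x k))) ∈
        St15.WR lam ι d fun j => x (kof j) := by
      apply St15.lof_mem_WR
      rw [kof_jk k]
      exact Submodule.mem_span_singleton_self _
    rw [hWeq, St15.mem_WR] at hmem
    have h2 := hmem (jk k)
    rw [DirectSum.component.lof_self, kof_jk k] at h2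
    exact St15.pow_dvd_of_mem_S lam (by rw [hjk k]; exact hybd k) h2
  -- main bijection
  have hcard1 : Nat.card {W : Submodule ℂ (⨁ j : ι,
        Polynomial ℂ ⧸ Ideal.span {(X - C lam) ^ d j}) //
      FullyInv lam ι d W ∧ Module.finrank ℂ W = n} =
      Nat.card {a : Fin m → ℕ //
        ((∀ k, a k ≤ i k) ∧ Monotone a ∧ Monotone fun k => i k - a k) ∧
          ∑ k, mult k * (i k - a k) = n} := by
    refine (Nat.card_congr (Equiv.ofBijective
      (fun a => ⟨Wof a.1,
        fun φ w hw => St15.WR_invariant lam ι d _ (hbridge a.1 a.2.1) φ w hw,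
        by rw [hfr a.1 a.2.1.1]; exact a.2.2⟩) ⟨?_, ?_⟩)).symm
    · -- injective
      rintro ⟨x, hx⟩ ⟨y, hy⟩ h
      have h' : Wof x = Wof y := congrArg Subtype.val h
      ext1
      funext k
      show x k = y k
      have h1 := hinj_aux x y hy.1.1 h' k
      have h2 := hinj_aux y x hx.1.1 h'.symm k
      omega
    · -- surjective
      rintro ⟨W, hinv, hrank⟩
      obtain ⟨a', ha1, hcross, hWeq⟩ := St15.classify lam d W hinv
      set a : Fin m → ℕ := fun k => a' (jk k) with ha
      have hconst : ∀ j, a' j = a (kof j) := by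
        intro j
        have h1 := hcross j (jk (kof j))
        have h2 := hcross (jk (kof j)) j
        have h3 : d (jk (kof j)) = d j := by rw [hjk (kof j), ← hkof j]
        simp only [ha]
        omega
      have hWa : W = Wof a := by
        rw [hWeq, hWof]
        exact congrArg _ (congrArg (St15.WR lam ι d) (funext fun j => (hconst j)))
      have hbd : ∀ k, a k ≤ i k := fun k => by
        rw [← hjk k]; exact ha1 (jk k)
      have hamono : Monotone a := by
        intro k k' hkk'
        have h1 := hcross (jk k') (jk k)
        have h2 : d (jk k) ≤ d (jk k') := by
          rw [hjk k, hjk k']; exact hmono.monotone hkk'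
        simp only [ha]
        omega
      have hbmono : Monotone fun k => i k - a k := by
        intro k k' hkk'
        have h1 := hcross (jk k) (jk k')
        have h2 : d (jk k) ≤ d (jk k') := by
          rw [hjk k, hjk k']; exact hmono.monotone hkk'
        have h3 := hbd k
        have h4 := hbd k'
        rw [hjk k, hjk k'] at h1 h2
        show i k - a k ≤ i k' - a k'
        simp only [ha] at h3 h4 ⊢
        omega
      have hdim : ∑ k, mult k * (i k - a k) = n := by
        rw [← hrank, hWa, hfr a hbd]
      exact ⟨⟨a, ⟨⟨hbd, hamono, hbmono⟩, hdim⟩⟩, Subtype.ext hWa.symm⟩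
  rw [hcard1, St15C.card_T2_eq_T3 i Δ mult M hmono hD hM n,
    St15C.card_T3_eq_coeff Δ M n, hf]
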